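/- arXiv:1110.2216 — 9 statements merged into one kernel-verified Lean document; each statement's English description precedes it below -/
import Mathlib

section
/- Let (Σ',R') with map abs : Σ → Σ' be an abstraction of a lightest derivation problem (Σ,R) with additive rules. Then for every statement C ∈ Σ, ℓ(abs(C), R') ≤ ℓ(C, R): the lightest derivable weight of the abstraction of C is at most the lightest derivable weight of C. -/
open scoped ENNReal

/-- A lightest derivation problem with additive rules: each rule
`A_1,...,A_n →_v C` assigns to the conclusion the weight `v` plus the sum of
the antecedent weights, with `v ≥ 0`. -/
structure ALDP where
  Stmt : Type
  Rule : Type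
  n : Rule → ℕ
  ant : (r : Rule) → Fin (n r) → Stmt
  concl : Rule → Stmt
  v : Rule → ℝ≥0∞

namespace ALDP

/-- Derivability of a weight assignment `(B = w)`: there is a derivation tree
for `B` whose weight (sum of the weights of the rules in it) is `w`. -/
inductive Derives (P : ALDP) : P.Stmt → ℝ≥0∞ → Prop
  | step (r : P.Rule) (w : Fin (P.n r) → ℝ≥0∞)
      (hd : ∀ i, Derives P (P.ant r i) (w i)) :
      Derives P (P.concl r) (P.v r + ∑ i, w i)

/-- `ℓ(B,R)`, the infimum of the weights derivable for `B`. -/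
noncomputable def ell (P : ALDP) (B : P.Stmt) : ℝ≥0∞ := sInf {w | P.Derives B w}

/-- `CtxDerives P goal B u` : `B` has a context of weight `u`, i.e. a
derivation of `goal` with a hole that can be filled in by a derivation of `B`;
the weight of a context is the sum of the weights of the rules in it. -/
inductive CtxDerives (P : ALDP) (goal : P.Stmt) : P.Stmt → ℝ≥0∞ → Prop
  | base : CtxDerives P goal goal 0
  | step (r : P.Rule) (i : Fin (P.n r)) (u : ℝ≥0∞) (w : Fin (P.n r) → ℝ≥0∞)
      (hc : CtxDerives P goal (P.concl r) u)
      (hd : ∀ j, j ≠ i → P.Derives (P.ant r j) (w j)) :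
      CtxDerives P goal (P.ant r i) (u + P.v r + ∑ j ∈ Finset.univ.erase i, w j)

/-- `ℓ(context(B),R)`, the weight of a lightest context for `B`. -/
noncomputable def ellCtx (P : ALDP) (goal B : P.Stmt) : ℝ≥0∞ :=
  sInf {u | P.CtxDerives goal B u}

/-- `(Q, abs)` is an abstraction of `P`: for every rule
`A_1,...,A_n →_v C` of `P` there is a rule
`abs(A_1),...,abs(A_n) →_{v'} abs(C)` of `Q` with `v' ≤ v`. -/
def IsAbstraction (P Q : ALDP) (abs : P.Stmt → Q.Stmt) : Prop :=
  ∀ r : P.Rule, ∃ r' : Q.Rule, ∃ e : Q.n r' = P.n r,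
    (∀ i : Fin (P.n r), Q.ant r' (Fin.cast e.symm i) = abs (P.ant r i)) ∧
    Q.concl r' = abs (P.concl r) ∧ Q.v r' ≤ P.v r

/-- A heuristic `h` is monotone (for additive rules) if for every rule
`A_1,...,A_n →_v C` and derivable weight assignments `(A_i = w_i)`,
`w_i + h(A_i) ≤ v + w_1 + ... + w_n + h(C)`. -/
def MonotoneHeuristic (P : ALDP) (h : P.Stmt → ℝ≥0∞) : Prop :=
  ∀ (r : P.Rule) (w : Fin (P.n r) → ℝ≥0∞),
    (∀ i, P.Derives (P.ant r i) (w i)) →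
    ∀ i, w i + h (P.ant r i) ≤ P.v r + (∑ j, w j) + h (P.concl r)

end ALDP


theorem abstraction_derives (P Q : ALDP) (abs : P.Stmt → Q.Stmt)
    (habs : ALDP.IsAbstraction P Q abs) {B : P.Stmt} {w : ℝ≥0∞}
    (hd : P.Derives B w) : ∃ w', Q.Derives (abs B) w' ∧ w' ≤ w := by
  induction hd with
  | step r w hd ih =>
    obtain ⟨r', e, hant, hconcl, hv⟩ := habs r
    choose w' hw' hle using ih
    have hder : Q.Derives (Q.concl r') (Q.v r' + ∑ i, w' (Fin.cast e i)) := by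
      refine ALDP.Derives.step r' (fun i => w' (Fin.cast e i)) (fun i => ?_)
      have := hw' (Fin.cast e i)
      rwa [← hant (Fin.cast e i), Fin.cast_cast, Fin.cast_eq_self] at this
    rw [hconcl] at hder
    refine ⟨_, hder, ?_⟩
    have : ∑ i, w' (Fin.cast e i) = ∑ i, w' i :=
      Fintype.sum_equiv (finCongr e) _ _ (fun i => rfl)
    rw [this]
    exact add_le_add hv (Finset.sum_le_sum fun i _ => hle i)

/-- If `(Σ',R')` with map `abs` is an abstraction of an additive
lightest derivation problem `(Σ,R)`, then for every statement `C`,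
`ℓ(abs(C), R') ≤ ℓ(C, R)`. -/
theorem abstraction_ell_le (P Q : ALDP) (abs : P.Stmt → Q.Stmt)
    (habs : ALDP.IsAbstraction P Q abs) :
    ∀ C : P.Stmt, Q.ell (abs C) ≤ P.ell C := by
  intro C
  refine le_sInf fun w hw => ?_
  obtain ⟨w', hd, hle⟩ := abstraction_derives P Q abs habs hw
  exact le_trans (sInf_le hd) hle
end

section
/- Let (Σ',R') with map abs be an abstraction of an additive lightest derivation problem (Σ,R) with goal statement goal, and let the abstract goal be abs(goal). Then for every statement C ∈ Σ, ℓ(context(abs(C)), R') ≤ ℓ(context(C), R); that is, the heuristic h(C) = ℓ(context(abs(C)), R') is admissible. -/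
open scoped ENNReal

theorem abs_derives_aux (P Q : ALDP) (abs : P.Stmt → Q.Stmt)
    (habs : ALDP.IsAbstraction P Q abs) :
    ∀ {B w}, P.Derives B w → ∃ w', Q.Derives (abs B) w' ∧ w' ≤ w := by
  intro B w h
  induction h with
  | step r w hd ih =>
    obtain ⟨r', e, hant, hconcl, hv⟩ := habs r
    choose w' hw' hle using ih
    have hant' : ∀ j : Fin (Q.n r'), Q.ant r' j = abs (P.ant r (Fin.cast e j)) :=
      fun j => hant (Fin.cast e j)
    refine ⟨Q.v r' + ∑ j, w' (Fin.cast e j), ?_, ?_⟩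
    · have hstep := ALDP.Derives.step (P := Q) r' (fun j => w' (Fin.cast e j))
        (fun j => by rw [hant']; exact hw' _)
      rwa [hconcl] at hstep
    · have hsum : ∑ j : Fin (Q.n r'), w' (Fin.cast e j) = ∑ i, w' i :=
        Fintype.sum_equiv (finCongr e) _ _ (fun j => rfl)
      rw [hsum]
      exact add_le_add hv (Finset.sum_le_sum fun i _ => hle i)

theorem abs_ctx_aux (P Q : ALDP) (abs : P.Stmt → Q.Stmt)
    (habs : ALDP.IsAbstraction P Q abs) (goal : P.Stmt) :
    ∀ {C u}, P.CtxDerives goal C u →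
      ∃ u', Q.CtxDerives (abs goal) (abs C) u' ∧ u' ≤ u := by
  intro C u h
  induction h with
  | base => exact ⟨0, ALDP.CtxDerives.base, le_rfl⟩
  | step r i u w hc hd ih =>
    obtain ⟨u', hu', hule⟩ := ih
    obtain ⟨r', e, hant, hconcl, hv⟩ := habs r
    have hant' : ∀ j : Fin (Q.n r'), Q.ant r' j = abs (P.ant r (Fin.cast e j)) :=
      fun j => hant (Fin.cast e j)
    classical
    choose wd hwd hwdle using
      fun (j : Fin (P.n r)) (hj : j ≠ i) => abs_derives_aux P Q abs habs (hd j hj)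
    set w' : Fin (Q.n r') → ℝ≥0∞ := fun j =>
      if hj : Fin.cast e j ≠ i then wd (Fin.cast e j) hj else 0 with hw'def
    have hctx : Q.CtxDerives (abs goal) (Q.ant r' (Fin.cast e.symm i))
        (u' + Q.v r' + ∑ j ∈ Finset.univ.erase (Fin.cast e.symm i), w' j) := by
      refine ALDP.CtxDerives.step r' (Fin.cast e.symm i) u' w' ?_ ?_
      · rwa [hconcl]
      · intro j hj
        have hj' : Fin.cast e j ≠ i := by
          intro hEq
          apply hj
          have : j = Fin.cast e.symm (Fin.cast e j) := rfl
          rw [this, hEq]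
        rw [hant']
        simp only [hw'def, dif_pos hj']
        exact hwd _ hj'
    rw [hant (i := i)] at hctx
    refine ⟨_, hctx, ?_⟩
    have hzero : w' (Fin.cast e.symm i) = 0 := by
      simp [hw'def]
    have hsum : ∑ j ∈ Finset.univ.erase (Fin.cast e.symm i), w' j
        ≤ ∑ j ∈ Finset.univ.erase i, w j := by
      have h1 : ∑ j ∈ Finset.univ.erase (Fin.cast e.symm i), w' j
          = ∑ j, w' j := Finset.sum_erase _ hzero
      have h2 : ∑ j : Fin (Q.n r'), w' j
          = ∑ k : Fin (P.n r), w' (Fin.cast e.symm k) :=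
        (Fintype.sum_equiv (finCongr e) _ _ (fun j => rfl))
      rw [h1, h2]
      have h3 : ∑ k : Fin (P.n r), w' (Fin.cast e.symm k)
          = ∑ k ∈ Finset.univ.erase i, w' (Fin.cast e.symm k) := by
        refine (Finset.sum_erase _ ?_).symm
        simp [hw'def]
      rw [h3]
      refine Finset.sum_le_sum fun k hk => ?_
      have hki : k ≠ i := Finset.ne_of_mem_erase hk
      have hki' : Fin.cast e (Fin.cast e.symm k) ≠ i := hki
      simp only [hw'def, dif_pos hki']
      exact hwdle _ hki'
    calc u' + Q.v r' + ∑ j ∈ Finset.univ.erase (Fin.cast e.symm i), w' j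
        ≤ u + P.v r + ∑ j ∈ Finset.univ.erase i, w j :=
          add_le_add (add_le_add hule hv) hsum

/-- If `(Σ',R')` with map `abs` is an abstraction of an additive
lightest derivation problem `(Σ,R)` with goal `goal` (the abstract goal being
`abs(goal)`), then for every statement `C`,
`ℓ(context(abs(C)), R') ≤ ℓ(context(C), R)`; i.e. the heuristic
`h(C) = ℓ(context(abs(C)), R')` is admissible. -/
theorem abstraction_ellCtx_le (P Q : ALDP) (abs : P.Stmt → Q.Stmt)
    (habs : ALDP.IsAbstraction P Q abs) (goal : P.Stmt) :
    ∀ C : P.Stmt, Q.ellCtx (abs goal) (abs C) ≤ P.ellCtx goal C := by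
  intro C
  refine le_sInf fun u hu => ?_
  obtain ⟨u', hu', hle⟩ := abs_ctx_aux P Q abs habs goal hu
  exact le_trans (sInf_le hu') hle
end

section
/- Let (Σ',R') with map abs be an abstraction of an additive lightest derivation problem (Σ,R). Then the heuristic h(C) = ℓ(context(abs(C)), R') is monotone: for every rule A_1,...,A_n →_v C in R and derivable weight assignments (A_i = w_i), w_i + h(A_i) ≤ v + w_1 + ... + w_n + h(C) for each i. -/
open scoped ENNReal

theorem abs_derives' (P Q : ALDP) (abs : P.Stmt → Q.Stmt)
    (habs : ALDP.IsAbstraction P Q abs) {A : P.Stmt} {w : ℝ≥0∞}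
    (h : P.Derives A w) : ∃ w', w' ≤ w ∧ Q.Derives (abs A) w' := by
  induction h with
  | step r w hd ih =>
    choose w' hle hder using ih
    obtain ⟨r', e, hant, hconcl, hv⟩ := habs r
    refine ⟨Q.v r' + ∑ i : Fin (Q.n r'), w' (Fin.cast e i), ?_, ?_⟩
    · have hs : ∑ i : Fin (Q.n r'), w' (Fin.cast e i) = ∑ i, w' i := Fin.sum_congr' w' e ▸ rfl
      rw [hs]
      exact add_le_add hv (Finset.sum_le_sum fun i _ => hle i)
    · rw [← hconcl]
      refine ALDP.Derives.step (P := Q) r' _ fun i => ?_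
      have hcc : Fin.cast e.symm (Fin.cast e i) = i := rfl
      have := hder (Fin.cast e i)
      rwa [← hant (Fin.cast e i), hcc] at this

/-- If `(Σ',R')` with map `abs` is an abstraction of an additive
lightest derivation problem `(Σ,R)` with goal `goal`, then the heuristic
`h(C) = ℓ(context(abs(C)), R')` is monotone: for every rule
`A_1,...,A_n →_v C` in `R` and derivable weight assignments `(A_i = w_i)`,
`w_i + h(A_i) ≤ v + w_1 + ... + w_n + h(C)` for each `i`. -/
theorem abstraction_heuristic_monotone (P Q : ALDP) (abs : P.Stmt → Q.Stmt)
    (habs : ALDP.IsAbstraction P Q abs) (goal : P.Stmt) :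
    P.MonotoneHeuristic (fun C => Q.ellCtx (abs goal) (abs C)) := by
  intro r w hd i
  obtain ⟨r', e, hant, hconcl, hv⟩ := habs r
  choose w' hle hder using fun j => abs_derives' P Q abs habs (hd j)
  simp only
  have key : ∀ u, Q.CtxDerives (abs goal) (abs (P.concl r)) u →
      Q.ellCtx (abs goal) (abs (P.ant r i)) ≤
        u + P.v r + ∑ j ∈ Finset.univ.erase i, w j := by
    intro u hu
    have hctx := ALDP.CtxDerives.step (P := Q) (goal := abs goal) r' (Fin.cast e.symm i) u
      (fun j => w' (Fin.cast e j))
      (by rwa [hconcl]) (fun j hj => by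
        have hcc : Fin.cast e.symm (Fin.cast e j) = j := rfl
        have := hder (Fin.cast e j)
        rwa [← hant (Fin.cast e j), hcc] at this)
    rw [hant i] at hctx
    refine le_trans (sInf_le hctx) ?_
    refine add_le_add (add_le_add le_rfl hv) ?_
    have hsum : ∑ j ∈ Finset.univ.erase (Fin.cast e.symm i), w' (Fin.cast e j)
        = ∑ j ∈ Finset.univ.erase i, w' j := by
      refine Finset.sum_nbij' (fun j => Fin.cast e j) (fun j => Fin.cast e.symm j) ?_ ?_ ?_ ?_ ?_
      · intro a ha
        simp only [Finset.mem_erase, Finset.mem_univ, and_true] at ha ⊢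
        intro hcon; apply ha; apply Fin.ext; have hv2 := congrArg Fin.val hcon; exact hv2
      · intro a ha
        simp only [Finset.mem_erase, Finset.mem_univ, and_true] at ha ⊢
        intro hcon; apply ha; apply Fin.ext; have hv2 := congrArg Fin.val hcon; exact hv2
      · intro a _; rfl
      · intro a _; rfl
      · intro a _; rfl
    rw [hsum]
    exact Finset.sum_le_sum fun j _ => hle j
  show w i + Q.ellCtx (abs goal) (abs (P.ant r i)) ≤
      P.v r + (∑ j, w j) + Q.ellCtx (abs goal) (abs (P.concl r))
  rw [show Q.ellCtx (abs goal) (abs (P.concl r))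
      = ⨅ u ∈ {u | Q.CtxDerives (abs goal) (abs (P.concl r)) u}, u from sInf_eq_iInf,
    ENNReal.add_iInf]
  refine le_iInf fun u => ?_
  rw [ENNReal.add_iInf]
  refine le_iInf fun hu => ?_
  calc w i + Q.ellCtx (abs goal) (abs (P.ant r i))
      ≤ w i + (u + P.v r + ∑ j ∈ Finset.univ.erase i, w j) :=
        add_le_add le_rfl (key u hu)
    _ = P.v r + (∑ j, w j) + u := by
        rw [← Finset.add_sum_erase _ w (Finset.mem_univ i)]; ring
end

section
/- During the execution of the prioritized rules A(R) of A* lightest derivation with a monotone heuristic h and non-decreasing weight functions, every weight assignment (B = w) that enters the set S satisfies w = ℓ(B,R), i.e., all expanded assignments are lightest derivation weights. -/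
open scoped ENNReal

attribute [local instance] Classical.propDecidable

/-- A lightest derivation problem given by a set of prioritized rules: each
rule `A_1,...,A_n →_g C` has a weight function `g` and a priority function
`pr`, both depending on the antecedent weights. -/
structure PLDP where
  Stmt : Type
  Rule : Type
  n : Rule → ℕ
  ant : (r : Rule) → Fin (n r) → Stmt
  concl : Rule → Stmt
  g : (r : Rule) → (Fin (n r) → ℝ≥0∞) → ℝ≥0∞
  pr : (r : Rule) → (Fin (n r) → ℝ≥0∞) → ℝ≥0∞

namespace PLDP

/-- Derivability of a weight assignment `(B = w)` using the rules. -/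
inductive Derives (P : PLDP) : P.Stmt → ℝ≥0∞ → Prop
  | step (r : P.Rule) (w : Fin (P.n r) → ℝ≥0∞)
      (hd : ∀ i, Derives P (P.ant r i) (w i)) :
      Derives P (P.concl r) (P.g r w)

/-- `ℓ(B,R)`, the infimum of the weights derivable for `B`. -/
noncomputable def ell (P : PLDP) (B : P.Stmt) : ℝ≥0∞ := sInf {w | P.Derives B w}

/-- A state of the generic execution procedure: the set `S` of expanded weight
assignments (a partial map from statements to weights) together with the
priority queue `Q` of pending weight assignments with their priorities. -/
abbrev State (P : PLDP) :=
  (P.Stmt → Option ℝ≥0∞) × Set (P.Stmt × ℝ≥0∞ × ℝ≥0∞)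

/-- The initial queue: the assignments defined by rules with no antecedents,
at the priorities given by those rules. -/
def initQ (P : PLDP) : Set (P.Stmt × ℝ≥0∞ × ℝ≥0∞) :=
  {x | ∃ (r : P.Rule) (_ : P.n r = 0) (w : Fin (P.n r) → ℝ≥0∞),
    x = (P.concl r, P.g r w, P.pr r w)}

/-- The initial state: `S` is empty, `Q` contains the conclusions of rules
with no antecedents. -/
def init (P : PLDP) : P.State := (fun _ => none, P.initQ)

/-- The assignments derivable in a single rule step from `(B = ·)` and the
other assignments recorded in `S`, queued at the priority given by the rule. -/
def newItems (P : PLDP) (S : P.Stmt → Option ℝ≥0∞) (B : P.Stmt) :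
    Set (P.Stmt × ℝ≥0∞ × ℝ≥0∞) :=
  {x | ∃ (r : P.Rule) (w : Fin (P.n r) → ℝ≥0∞),
      (∀ i, S (P.ant r i) = some (w i)) ∧ (∃ i, P.ant r i = B) ∧
      x = (P.concl r, P.g r w, P.pr r w)}

/-- One iteration of the generic procedure: remove a minimum-priority
assignment `(B = w)` from the queue; if `B` already has a weight in `S` it is
ignored, otherwise `(B = w)` is added to `S` and every assignment derivable
from `(B = w)` and the other assignments in `S` by a single rule is inserted
into the queue at the priority specified by the rule. -/
inductive Step (P : PLDP) : P.State → P.State → Prop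
  | skip (S : P.Stmt → Option ℝ≥0∞) (Q : Set (P.Stmt × ℝ≥0∞ × ℝ≥0∞))
      (B : P.Stmt) (w q : ℝ≥0∞)
      (hmem : (B, w, q) ∈ Q) (hmin : ∀ x ∈ Q, q ≤ x.2.2)
      (hold : S B ≠ none) :
      Step P (S, Q) (S, Q \ {(B, w, q)})
  | expand (S : P.Stmt → Option ℝ≥0∞) (Q : Set (P.Stmt × ℝ≥0∞ × ℝ≥0∞))
      (B : P.Stmt) (w q : ℝ≥0∞)
      (hmem : (B, w, q) ∈ Q) (hmin : ∀ x ∈ Q, q ≤ x.2.2)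
      (hnew : S B = none) :
      Step P (S, Q) (Function.update S B (some w),
        (Q \ {(B, w, q)}) ∪ P.newItems (Function.update S B (some w)) B)

/-- The states reachable by the generic execution procedure. -/
inductive Reaches (P : PLDP) : P.State → Prop
  | init : Reaches P P.init
  | step (s s' : P.State) (h : Reaches P s) (hs : P.Step s s') : Reaches P s'

/-- The step at which a statement `B` is expanded (moved from the queue into
`S`). -/
def StepExpands (P : PLDP) (s s' : P.State) (B : P.Stmt) : Prop :=
  P.Step s s' ∧ s.1 B = none ∧ s'.1 B ≠ none

/-- A heuristic `h` is monotone if for every rule and derivable antecedent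
weights `w_i`, `w_i + h(A_i) ≤ g(w_1,...,w_n) + h(C)`. -/
def MonotoneHeuristic (P : PLDP) (h : P.Stmt → ℝ≥0∞) : Prop :=
  ∀ (r : P.Rule) (w : Fin (P.n r) → ℝ≥0∞),
    (∀ i, P.Derives (P.ant r i) (w i)) →
    ∀ i, w i + h (P.ant r i) ≤ P.g r w + h (P.concl r)

end PLDP

/-- The execution invariant: queue items are sound and have priority
`w + h B`; `S` entries are derivable and equal to `ℓ`; and every rule whose
antecedents are all recorded in `S` either has its conclusion in `S` or an
item for its conclusion in the queue at priority at most the rule priority. -/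
def AstarInv (P : PLDP) (h : P.Stmt → ℝ≥0∞) (s : P.State) : Prop :=
  (∀ B w q, (B, w, q) ∈ s.2 → P.Derives B w ∧ q = w + h B) ∧
  (∀ B w, s.1 B = some w → P.Derives B w) ∧
  (∀ B w, s.1 B = some w → w = P.ell B) ∧
  (∀ (r : P.Rule) (w' : Fin (P.n r) → ℝ≥0∞),
    (∀ i, s.1 (P.ant r i) = some (w' i)) →
      s.1 (P.concl r) ≠ none ∨
        ∃ u p, (P.concl r, u, p) ∈ s.2 ∧ p ≤ P.pr r w')

/-- The frontier lemma: for any derivation of `C` with weight `v`, either `C`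
is already expanded or the queue contains an item of priority at most
`v + h C`. -/
theorem astar_frontier (P : PLDP) (h : P.Stmt → ℝ≥0∞)
    (hg : ∀ r : P.Rule, Monotone (P.g r))
    (hmono : P.MonotoneHeuristic h)
    (hpr : ∀ (r : P.Rule) (w : Fin (P.n r) → ℝ≥0∞),
      P.pr r w = P.g r w + h (P.concl r))
    (s : P.State) (hinv : AstarInv P h s) :
    ∀ C v, P.Derives C v →
      s.1 C ≠ none ∨ ∃ D u p, (D, u, p) ∈ s.2 ∧ p ≤ v + h C := by
  intro C v hder
  induction hder with
  | step r w hd ih =>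
    by_cases hex : ∃ i, s.1 (P.ant r i) = none
    · obtain ⟨i, hi⟩ := hex
      rcases ih i with h1 | ⟨D, u, p, hmem, hple⟩
      · exact absurd hi h1
      · exact Or.inr ⟨D, u, p, hmem, hple.trans (hmono r w hd i)⟩
    · push_neg at hex
      have hsome : ∀ i, ∃ v, s.1 (P.ant r i) = some v := by
        intro i
        cases hcase : s.1 (P.ant r i) with
        | none => exact absurd hcase (hex i)
        | some v => exact ⟨v, rfl⟩
      choose w' hw' using hsome
      rcases hinv.2.2.2 r w' hw' with h1 | ⟨u, p, hmem, hple⟩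
      · exact Or.inl h1
      · refine Or.inr ⟨P.concl r, u, p, hmem, hple.trans ?_⟩
        rw [hpr]
        have hle : w' ≤ w := by
          intro i
          calc w' i = P.ell (P.ant r i) := hinv.2.2.1 _ _ (hw' i)
            _ ≤ w i := sInf_le (hd i)
        exact add_le_add_left (hg r hle) _

/-- The invariant is preserved by every step of the execution. -/
theorem astar_inv_step (P : PLDP) (h : P.Stmt → ℝ≥0∞) (hfin : ∀ B, h B ≠ ⊤)
    (hg : ∀ r : P.Rule, Monotone (P.g r))
    (hmono : P.MonotoneHeuristic h)
    (hpr : ∀ (r : P.Rule) (w : Fin (P.n r) → ℝ≥0∞),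
      P.pr r w = P.g r w + h (P.concl r))
    (s s' : P.State) (hinv : AstarInv P h s) (hs : P.Step s s') :
    AstarInv P h s' := by
  obtain ⟨hQ, hSd, hSl, hRule⟩ := hinv
  cases hs with
  | skip S Q B w q hmem hmin hold =>
    refine ⟨fun B0 w0 q0 hx => hQ B0 w0 q0 hx.1, hSd, hSl, ?_⟩
    intro r w' hw'
    rcases hRule r w' hw' with h1 | ⟨u, p, hm, hp⟩
    · exact Or.inl h1
    · by_cases heq : (P.concl r, u, p) = (B, w, q)
      · left
        have : P.concl r = B := congrArg Prod.fst heq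
        rw [this]; exact hold
      · exact Or.inr ⟨u, p, ⟨hm, heq⟩, hp⟩
  | expand S Q B w q hmem hmin hnew =>
    obtain ⟨hderB, hqB⟩ := hQ B w q hmem
    -- soundness of the new S
    have hSd' : ∀ C v, Function.update S B (some w) C = some v → P.Derives C v := by
      intro C v hv
      by_cases hCB : C = B
      · subst hCB
        rw [Function.update_self] at hv
        cases hv
        exact hderB
      · rw [Function.update_of_ne hCB] at hv
        exact hSd C v hv
    -- the new queue is sound
    have hQ' : ∀ B0 w0 q0,
        (B0, w0, q0) ∈ (Q \ {(B, w, q)}) ∪ P.newItems (Function.update S B (some w)) B →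
        P.Derives B0 w0 ∧ q0 = w0 + h B0 := by
      intro B0 w0 q0 hx
      rcases hx with hx | hx
      · exact hQ B0 w0 q0 hx.1
      · obtain ⟨r, w', hSant, _, heq⟩ := hx
        simp only [Prod.mk.injEq] at heq
        obtain ⟨rfl, rfl, rfl⟩ := heq
        refine ⟨PLDP.Derives.step r w' fun i => hSd' _ _ (hSant i), hpr r w'⟩
    -- the new S assigns only lightest weights
    have hSl' : ∀ C v, Function.update S B (some w) C = some v → v = P.ell C := by
      intro C v hv
      by_cases hCB : C = B
      · subst hCB
        rw [Function.update_self] at hv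
        cases hv
        refine le_antisymm ?_ (sInf_le hderB)
        refine le_sInf fun v' hv' => ?_
        rcases astar_frontier P h hg hmono hpr (S, Q) ⟨hQ, hSd, hSl, hRule⟩ _ v' hv' with
          h1 | ⟨D, u, p, hm, hp⟩
        · exact absurd hnew h1
        · have hq : q ≤ p := hmin (D, u, p) hm
          exact (ENNReal.add_le_add_iff_right (hfin _)).mp (hqB ▸ hq.trans hp)
      · rw [Function.update_of_ne hCB] at hv
        exact hSl C v hv
    refine ⟨hQ', hSd', hSl', ?_⟩
    intro r w' hw'
    by_cases hB : ∃ i, P.ant r i = B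
    · exact Or.inr ⟨P.g r w', P.pr r w',
        Or.inr ⟨r, w', hw', hB, rfl⟩, le_refl _⟩
    · push_neg at hB
      have hw'' : ∀ i, S (P.ant r i) = some (w' i) := by
        intro i
        have h2 : Function.update S B (some w) (P.ant r i) = some (w' i) := hw' i
        rwa [Function.update_of_ne (hB i)] at h2
      rcases hRule r w' hw'' with h1 | ⟨u, p, hm, hp⟩
      · left
        show Function.update S B (some w) (P.concl r) ≠ none
        by_cases hCB : P.concl r = B
        · rw [hCB, Function.update_self]; exact Option.some_ne_none _
        · rwa [Function.update_of_ne hCB]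
      · by_cases heq : (P.concl r, u, p) = (B, w, q)
        · left
          show Function.update S B (some w) (P.concl r) ≠ none
          have hCB : P.concl r = B := congrArg Prod.fst heq
          rw [hCB, Function.update_self]; exact Option.some_ne_none _
        · exact Or.inr ⟨u, p, Or.inl ⟨hm, heq⟩, hp⟩

/-- The invariant holds initially. -/
theorem astar_inv_init (P : PLDP) (h : P.Stmt → ℝ≥0∞)
    (hpr : ∀ (r : P.Rule) (w : Fin (P.n r) → ℝ≥0∞),
      P.pr r w = P.g r w + h (P.concl r)) :
    AstarInv P h P.init := by
  refine ⟨?_, fun B w hw => by simp [PLDP.init] at hw,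
    fun B w hw => by simp [PLDP.init] at hw, ?_⟩
  · intro B w q hx
    obtain ⟨r, hn, w', heq⟩ := hx
    simp only [Prod.mk.injEq] at heq
    obtain ⟨rfl, rfl, rfl⟩ := heq
    exact ⟨PLDP.Derives.step r w' fun i => (Nat.not_lt_zero i.1 (hn ▸ i.isLt)).elim,
      hpr r w'⟩
  · intro r w' hw'
    by_cases hn : P.n r = 0
    · exact Or.inr ⟨P.g r w', P.pr r w', ⟨r, hn, w', rfl⟩, le_refl _⟩
    · exact absurd (hw' ⟨0, Nat.pos_of_ne_zero hn⟩) (by simp [PLDP.init])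

/-- During the execution of the prioritized rules `A(R)` of A*
lightest derivation (each rule prioritized at `g(w_1,...,w_n) + h(C)`) with a
monotone finite-valued heuristic `h` and non-decreasing weight functions,
every weight assignment `(B = w)` that enters `S` satisfies `w = ℓ(B,R)`. -/
theorem astar_expanded_weights_are_lightest (P : PLDP) [Finite P.Rule]
    (h : P.Stmt → ℝ≥0∞) (hfin : ∀ B, h B ≠ ⊤)
    (hg : ∀ r : P.Rule, Monotone (P.g r))
    (hmono : P.MonotoneHeuristic h)
    (hpr : ∀ (r : P.Rule) (w : Fin (P.n r) → ℝ≥0∞),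
      P.pr r w = P.g r w + h (P.concl r)) :
    ∀ s : P.State, P.Reaches s → ∀ (B : P.Stmt) (w : ℝ≥0∞),
      s.1 B = some w → w = P.ell B := by
  have key : ∀ s, P.Reaches s → AstarInv P h s := by
    intro s hs
    induction hs with
    | init => exact astar_inv_init P h hpr
    | step s s' _ hstep ih => exact astar_inv_step P h hfin hg hmono hpr s s' ih hstep
  exact fun s hs B w hw => (key s hs).2.2.1 B w hw
end

section
/- During the execution of Knuth's lightest derivation algorithm K(R) on a finite set of non-decreasing and superior rules, every weight assignment (B = w) added to S satisfies w = ℓ(B,R), and statements are expanded in non-decreasing order of ℓ(B,R). -/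
open scoped ENNReal

attribute [local instance] Classical.propDecidable

namespace PLDP

/-- The key invariant of the generic execution procedure for Knuth's
algorithm. -/
def Inv (P : PLDP) (s : P.State) : Prop :=
  (∀ B w, s.1 B = some w → P.Derives B w ∧ ∀ v, P.Derives B v → w ≤ v) ∧
  (∀ B w q, (B, w, q) ∈ s.2 → q = w ∧ P.Derives B w) ∧
  (∀ (r : P.Rule) (w' : Fin (P.n r) → ℝ≥0∞),
    (∀ i, s.1 (P.ant r i) = some (w' i)) →
    (∃ u, s.1 (P.concl r) = some u ∧ u ≤ P.g r w') ∨
    (∃ u, (P.concl r, u, u) ∈ s.2 ∧ u ≤ P.g r w'))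

variable {P : PLDP}

theorem inv_global (hg : ∀ r : P.Rule, Monotone (P.g r))
    (hsup : ∀ (r : P.Rule) (w : Fin (P.n r) → ℝ≥0∞) (i : Fin (P.n r)),
      w i ≤ P.g r w)
    {s : P.State} (hInv : P.Inv s) {B : P.Stmt} {v : ℝ≥0∞}
    (hd : P.Derives B v) :
    (∃ u, s.1 B = some u ∧ u ≤ v) ∨ (∃ C u, (C, u, u) ∈ s.2 ∧ u ≤ v) := by
  induction hd with
  | step r w hd ih =>
    by_cases hall : ∀ i, ∃ u, s.1 (P.ant r i) = some u ∧ u ≤ w i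
    · choose w' hw' hle using hall
      rcases hInv.2.2 r w' hw' with ⟨u, hu, hule⟩ | ⟨u, hu, hule⟩
      · exact Or.inl ⟨u, hu, hule.trans (hg r (fun i => hle i))⟩
      · exact Or.inr ⟨_, u, hu, hule.trans (hg r (fun i => hle i))⟩
    · push_neg at hall
      obtain ⟨i, hi⟩ := hall
      rcases ih i with ⟨u, hu, hule⟩ | ⟨C, u, hu, hule⟩
      · exact absurd hule (not_le.mpr (hi u hu))
      · exact Or.inr ⟨C, u, hu, hule.trans (hsup r w i)⟩

theorem inv_init (hpr : ∀ (r : P.Rule) (w : Fin (P.n r) → ℝ≥0∞),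
      P.pr r w = P.g r w) : P.Inv P.init := by
  refine ⟨?_, ?_, ?_⟩
  · intro B w h; exact absurd h (by simp [init])
  · rintro B w q ⟨r, h0, w', heq⟩
    simp only [Prod.mk.injEq] at heq
    obtain ⟨rfl, rfl, rfl⟩ := heq
    exact ⟨hpr r w', Derives.step r w' (fun i => absurd i.isLt (by omega))⟩
  · intro r w' hant
    by_cases h0 : P.n r = 0
    · right
      refine ⟨P.g r w', ⟨r, h0, w', ?_⟩, le_rfl⟩
      rw [hpr r w']
    · have := hant ⟨0, Nat.pos_of_ne_zero h0⟩
      simp [init] at this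

theorem inv_step (hg : ∀ r : P.Rule, Monotone (P.g r))
    (hsup : ∀ (r : P.Rule) (w : Fin (P.n r) → ℝ≥0∞) (i : Fin (P.n r)),
      w i ≤ P.g r w)
    (hpr : ∀ (r : P.Rule) (w : Fin (P.n r) → ℝ≥0∞), P.pr r w = P.g r w)
    {s s' : P.State} (hInv : P.Inv s) (hstep : P.Step s s') : P.Inv s' := by
  cases hstep with
  | skip S Q B w q hmem hmin hold =>
    obtain ⟨hq, hderB⟩ := hInv.2.1 B w q hmem
    subst hq
    refine ⟨hInv.1, ?_, ?_⟩
    · intro B' w' q' hx; exact hInv.2.1 B' w' q' hx.1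
    · intro r w' hant
      rcases hInv.2.2 r w' hant with h | ⟨u, hu, hule⟩
      · exact Or.inl h
      · by_cases hx : (P.concl r, u, u) = (B, q, q)
        · obtain ⟨u0, hu0⟩ := Option.ne_none_iff_exists'.mp hold
          have hcb : P.concl r = B := congrArg Prod.fst hx
          have huw : u = q := congrArg (fun p => p.2.1) hx
          refine Or.inl ⟨u0, by rw [hcb]; exact hu0, ?_⟩
          exact le_trans ((hInv.1 B u0 hu0).2 q hderB) (huw ▸ hule)
        · exact Or.inr ⟨u, ⟨hu, hx⟩, hule⟩
  | expand S Q B w q hmem hmin hnew =>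
    obtain ⟨hq, hderB⟩ := hInv.2.1 B w q hmem
    subst hq
    have hS' : ∀ B' u, Function.update S B (some q) B' = some u →
        P.Derives B' u ∧ ∀ v, P.Derives B' v → u ≤ v := by
      intro B' u h
      by_cases hb : B' = B
      · subst hb
        rw [Function.update_self] at h
        obtain rfl : q = u := Option.some.inj h
        refine ⟨hderB, ?_⟩
        intro v hv
        rcases inv_global hg hsup hInv hv with ⟨u', hu', _⟩ | ⟨C, u', hu', hle⟩
        · have hu2 : S B' = some u' := hu'
          rw [hnew] at hu2; cases hu2
        · exact le_trans (hmin _ hu') hle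
      · rw [Function.update_of_ne hb] at h
        exact hInv.1 B' u h
    refine ⟨hS', ?_, ?_⟩
    · rintro B' w' q' (⟨hx, -⟩ | ⟨r, ww, hants, hB, heq⟩)
      · exact hInv.2.1 B' w' q' hx
      · simp only [Prod.mk.injEq] at heq
        obtain ⟨rfl, rfl, rfl⟩ := heq
        exact ⟨hpr r ww, Derives.step r ww (fun i => (hS' _ _ (hants i)).1)⟩
    · intro r w' hant
      by_cases hB : ∃ i, P.ant r i = B
      · right
        refine ⟨P.g r w', Or.inr ⟨r, w', hant, hB, ?_⟩, le_rfl⟩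
        rw [hpr r w']
      · push_neg at hB
        have hant' : ∀ i, S (P.ant r i) = some (w' i) := by
          intro i
          have h2 : Function.update S B (some q) (P.ant r i) = some (w' i) :=
            hant i
          rwa [Function.update_of_ne (hB i)] at h2
        rcases hInv.2.2 r w' hant' with ⟨u, hu, hule⟩ | ⟨u, hu, hule⟩
        · left
          refine ⟨u, ?_, hule⟩
          have hu2 : S (P.concl r) = some u := hu
          have hcb : P.concl r ≠ B := by
            intro h; rw [h, hnew] at hu2; cases hu2
          show Function.update S B (some q) (P.concl r) = some u
          rw [Function.update_of_ne hcb]; exact hu2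
        · by_cases hx : (P.concl r, u, u) = (B, q, q)
          · left
            have hcb : P.concl r = B := congrArg Prod.fst hx
            have huw : u = q := congrArg (fun p => p.2.1) hx
            refine ⟨q, ?_, huw ▸ hule⟩
            show Function.update S B (some q) (P.concl r) = some q
            rw [hcb, Function.update_self]
          · exact Or.inr ⟨u, Or.inl ⟨hu, hx⟩, hule⟩

theorem inv_reaches (hg : ∀ r : P.Rule, Monotone (P.g r))
    (hsup : ∀ (r : P.Rule) (w : Fin (P.n r) → ℝ≥0∞) (i : Fin (P.n r)),
      w i ≤ P.g r w)
    (hpr : ∀ (r : P.Rule) (w : Fin (P.n r) → ℝ≥0∞), P.pr r w = P.g r w)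
    {s : P.State} (h : P.Reaches s) : P.Inv s := by
  induction h with
  | init => exact inv_init hpr
  | step s s' h hs ih => exact inv_step hg hsup hpr ih hs

theorem lb_step (hsup : ∀ (r : P.Rule) (w : Fin (P.n r) → ℝ≥0∞)
      (i : Fin (P.n r)), w i ≤ P.g r w)
    (hpr : ∀ (r : P.Rule) (w : Fin (P.n r) → ℝ≥0∞), P.pr r w = P.g r w)
    {s s' : P.State} {c : ℝ≥0∞} (hInv : P.Inv s) (hstep : P.Step s s')
    (hlb : ∀ x ∈ s.2, c ≤ x.2.2) : ∀ x ∈ s'.2, c ≤ x.2.2 := by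
  cases hstep with
  | skip S Q B w q hmem hmin hold => exact fun x hx => hlb x hx.1
  | expand S Q B w q hmem hmin hnew =>
    rintro x (⟨hx, -⟩ | ⟨r, ww, hants, ⟨i, hi⟩, rfl⟩)
    · exact hlb x hx
    · have hq := (hInv.2.1 B w q hmem).1
      have h1 : ww i = w := by
        have h := hants i
        rw [hi, Function.update_self] at h
        exact (Option.some.inj h).symm
      show c ≤ P.pr r ww
      rw [hpr]
      calc c ≤ q := hlb _ hmem
        _ = w := hq
        _ = ww i := h1.symm
        _ ≤ P.g r ww := hsup r ww i

theorem lb_rtg (hg : ∀ r : P.Rule, Monotone (P.g r))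
    (hsup : ∀ (r : P.Rule) (w : Fin (P.n r) → ℝ≥0∞) (i : Fin (P.n r)),
      w i ≤ P.g r w)
    (hpr : ∀ (r : P.Rule) (w : Fin (P.n r) → ℝ≥0∞), P.pr r w = P.g r w)
    {s t : P.State} {c : ℝ≥0∞} (hreach : P.Reaches s)
    (hlb : ∀ x ∈ s.2, c ≤ x.2.2) (h : Relation.ReflTransGen P.Step s t) :
    P.Reaches t ∧ ∀ x ∈ t.2, c ≤ x.2.2 := by
  induction h with
  | refl => exact ⟨hreach, hlb⟩
  | tail hab hbc ih =>
    exact ⟨.step _ _ ih.1 hbc,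
      lb_step hsup hpr (inv_reaches hg hsup hpr ih.1) hbc ih.2⟩

theorem expands_cases {s s' : P.State} {B : P.Stmt}
    (h : P.StepExpands s s' B) :
    ∃ w q, (B, w, q) ∈ s.2 ∧ (∀ x ∈ s.2, q ≤ x.2.2) ∧
      s'.1 = Function.update s.1 B (some w) ∧
      s'.2 = (s.2 \ {(B, w, q)}) ∪
        P.newItems (Function.update s.1 B (some w)) B := by
  obtain ⟨hstep, hnone, hsome⟩ := h
  cases hstep with
  | skip S Q B1 w q hmem hmin hold => exact absurd hnone hsome
  | expand S Q B1 w q hmem hmin hnew =>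
    have hBB : B = B1 := by
      by_contra hne
      rw [show ((Function.update S B1 (some w), (Q \ {(B1, w, q)}) ∪
        P.newItems (Function.update S B1 (some w)) B1) : P.State).1 B
          = Function.update S B1 (some w) B from rfl,
        Function.update_of_ne hne] at hsome
      exact hsome hnone
    subst hBB
    exact ⟨w, q, hmem, hmin, rfl, rfl⟩

end PLDP

/-- During the execution of Knuth's lightest derivation algorithm
`K(R)` (each rule prioritized at the weight of its conclusion) on a finite set
of non-decreasing and superior rules, every weight assignment `(B = w)` added
to `S` satisfies `w = ℓ(B,R)`, and statements are expanded in non-decreasing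
order of `ℓ(B,R)`. -/
theorem knuth_correct_and_in_order (P : PLDP) [Finite P.Rule]
    (hg : ∀ r : P.Rule, Monotone (P.g r))
    (hsup : ∀ (r : P.Rule) (w : Fin (P.n r) → ℝ≥0∞) (i : Fin (P.n r)),
      w i ≤ P.g r w)
    (hpr : ∀ (r : P.Rule) (w : Fin (P.n r) → ℝ≥0∞), P.pr r w = P.g r w) :
    -- every assignment added to S is a lightest derivation weight
    (∀ s : P.State, P.Reaches s → ∀ (B : P.Stmt) (w : ℝ≥0∞),
      s.1 B = some w → w = P.ell B) ∧
    -- statements are expanded in non-decreasing order of ℓ(B,R)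
    (∀ (s s' : P.State) (B : P.Stmt), P.Reaches s → P.StepExpands s s' B →
      ∀ (t t' : P.State) (B' : P.Stmt), Relation.ReflTransGen P.Step s' t →
        P.StepExpands t t' B' → P.ell B ≤ P.ell B') := by
  have part1 : ∀ s : P.State, P.Reaches s → ∀ (B : P.Stmt) (w : ℝ≥0∞),
      s.1 B = some w → w = P.ell B := by
    intro s hreach B w hSB
    have hInv := PLDP.inv_reaches hg hsup hpr hreach
    obtain ⟨hd, hmin⟩ := hInv.1 B w hSB
    exact le_antisymm (le_sInf fun v hv => hmin v hv) (sInf_le hd)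
  refine ⟨part1, ?_⟩
  intro s s' B hreach hexp t t' B' htt hexp'
  have hInv := PLDP.inv_reaches hg hsup hpr hreach
  obtain ⟨w, q, hmem, hmin, hS', hQ'⟩ := PLDP.expands_cases hexp
  have hq : q = w := (hInv.2.1 B w q hmem).1
  have hreach' : P.Reaches s' := .step s s' hreach hexp.1
  have hs'B : s'.1 B = some w := by rw [hS', Function.update_self]
  have hellB : P.ell B = w := (part1 s' hreach' B w hs'B).symm
  have hlb0 : ∀ x ∈ s'.2, w ≤ x.2.2 := by
    rw [hQ']
    rintro x (⟨hx, -⟩ | ⟨r, ww, hants, ⟨i, hi⟩, rfl⟩)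
    · exact hq ▸ hmin x hx
    · have h1 : ww i = w := by
        have h := hants i
        rw [hi, Function.update_self] at h
        exact (Option.some.inj h).symm
      show w ≤ P.pr r ww
      rw [hpr]
      exact h1 ▸ hsup r ww i
  obtain ⟨hreachT, hlbT⟩ := PLDP.lb_rtg hg hsup hpr hreach' hlb0 htt
  obtain ⟨w1, q1, hmem1, hmin1, hT', hQT'⟩ := PLDP.expands_cases hexp'
  have hInvT := PLDP.inv_reaches hg hsup hpr hreachT
  have hq1 : q1 = w1 := (hInvT.2.1 B' w1 q1 hmem1).1
  have hreachT' : P.Reaches t' := .step t t' hreachT hexp'.1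
  have ht'B' : t'.1 B' = some w1 := by rw [hT', Function.update_self]
  have hellB' : w1 = P.ell B' := part1 t' hreachT' B' w1 ht'B'
  calc P.ell B = w := hellB
    _ ≤ q1 := hlbT _ hmem1
    _ = w1 := hq1
    _ = P.ell B' := hellB'
end

section
/- For additive rules, for every statement B derivable in a context of the goal, ℓ(B,R) + ℓ(context(B),R) equals the infimum of the weights of derivations of goal that contain B as a sub-derivation conclusion. -/
open scoped ENNReal

namespace ALDP

/-- `DerivesWithSub P C wC A wA` : there is a derivation of `C` of weight `wC`
that contains a subderivation of `A` of weight `wA` (i.e. `A` appears in the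
derivation tree of `C`, and the subtree rooted at `A` has weight `wA`). -/
inductive DerivesWithSub (P : ALDP) : P.Stmt → ℝ≥0∞ → P.Stmt → ℝ≥0∞ → Prop
  | refl (C : P.Stmt) (w : ℝ≥0∞) (h : P.Derives C w) : DerivesWithSub P C w C w
  | step (r : P.Rule) (w : Fin (P.n r) → ℝ≥0∞) (i : Fin (P.n r))
      (A : P.Stmt) (wA : ℝ≥0∞)
      (hd : ∀ j, j ≠ i → P.Derives (P.ant r j) (w j))
      (hsub : DerivesWithSub P (P.ant r i) (w i) A wA) :
      DerivesWithSub P (P.concl r) (P.v r + ∑ j, w j) A wA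

end ALDP

namespace ALDP

/-- Composition of contexts. -/
lemma CtxDerives.comp {P : ALDP} {goal D A : P.Stmt} {u u' : ℝ≥0∞}
    (h1 : P.CtxDerives goal D u) (h2 : P.CtxDerives D A u') :
    P.CtxDerives goal A (u + u') := by
  induction h2 with
  | base => simpa using h1
  | step r i u₀ w hc hd ih =>
      have := CtxDerives.step r i (u + u₀) w ih hd
      simpa [add_assoc] using this

/-- Decompose a derivation-with-sub into a context and a derivation. -/
lemma DerivesWithSub.decomp {P : ALDP} {C A : P.Stmt} {W wA : ℝ≥0∞}
    (h : P.DerivesWithSub C W A wA) :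
    P.Derives A wA ∧ ∃ u, P.CtxDerives C A u ∧ W = u + wA := by
  induction h with
  | refl C w hC => exact ⟨hC, 0, CtxDerives.base, (zero_add _).symm⟩
  | step r w i A wA hd hsub ih =>
      obtain ⟨hA, u, hc, hw⟩ := ih
      refine ⟨hA, P.v r + (∑ j ∈ Finset.univ.erase i, w j) + u, ?_, ?_⟩
      · have h1 : P.CtxDerives (P.concl r) (P.ant r i)
            (0 + P.v r + ∑ j ∈ Finset.univ.erase i, w j) :=
          CtxDerives.step r i 0 w CtxDerives.base hd
        have := h1.comp hc
        simpa [add_assoc] using this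
      · have hsum : ∑ j, w j = w i + ∑ j ∈ Finset.univ.erase i, w j :=
          (Finset.add_sum_erase _ _ (Finset.mem_univ i)).symm
        rw [hsum, hw]; ring
  
/-- Fill a context with a derivation-with-sub. -/
lemma CtxDerives.fill {P : ALDP} {goal B A : P.Stmt} {u wB wA : ℝ≥0∞}
    (hc : P.CtxDerives goal B u) (hd : P.DerivesWithSub B wB A wA) :
    P.DerivesWithSub goal (u + wB) A wA := by
  revert hd
  induction hc generalizing wB with
  | base => intro hd; simpa using hd
  | step r i u₀ w hc hder ih =>
      intro hd
      set w' : Fin (P.n r) → ℝ≥0∞ := fun j => if j = i then wB else w j with hw'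
      have hstep : P.DerivesWithSub (P.concl r) (P.v r + ∑ j, w' j) A wA := by
        refine DerivesWithSub.step r w' i A wA ?_ ?_
        · intro j hj; simpa [hw', hj] using hder j hj
        · simpa [hw'] using hd
      have := ih hstep
      have hsum : ∑ j, w' j = wB + ∑ j ∈ Finset.univ.erase i, w j := by
        rw [← Finset.add_sum_erase _ w' (Finset.mem_univ i)]
        simp only [hw', if_pos rfl]
        congr 1
        exact Finset.sum_congr rfl fun j hj => by
          simp [Finset.ne_of_mem_erase hj]
      rw [hsum] at this
      convert this using 1
      ring

end ALDP

/-- For additive rules, for every statement `B` that is derivable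
and has a context of the goal, `ℓ(B,R) + ℓ(context(B),R)` equals the infimum
of the weights of derivations of `goal` that contain `B` as the conclusion of
a sub-derivation. -/
theorem ell_add_ellCtx_eq_inf (P : ALDP) (goal : P.Stmt) (B : P.Stmt)
    (hder : ∃ w, P.Derives B w) (hctx : ∃ u, P.CtxDerives goal B u) :
    P.ell B + P.ellCtx goal B =
      sInf {W | ∃ w, P.DerivesWithSub goal W B w} := by
  apply le_antisymm
  · -- ell + ellCtx ≤ sInf
    apply le_sInf
    rintro W ⟨w, hW⟩
    obtain ⟨hB, u, hc, rfl⟩ := hW.decomp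
    have h1 : P.ell B ≤ w := sInf_le hB
    have h2 : P.ellCtx goal B ≤ u := sInf_le hc
    calc P.ell B + P.ellCtx goal B ≤ w + u := add_le_add h1 h2
      _ = u + w := add_comm _ _
  · -- sInf ≤ ell + ellCtx
    rw [ALDP.ell, ALDP.ellCtx, ENNReal.sInf_add]
    simp only [le_iInf_iff]
    intro w hw
    rw [add_comm, ENNReal.sInf_add]
    simp only [le_iInf_iff]
    intro u hu
    apply sInf_le
    have : P.DerivesWithSub goal (u + w) B w :=
      hu.fill (ALDP.DerivesWithSub.refl B w hw)
    exact ⟨w, this⟩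
end

section
/- Let R be a set of additive rules and c(R) the context rules. Then a statement B has a context of weight u (with respect to goal) if and only if context(B) is derivable with weight u using the rules R ∪ c(R); hence ℓ(context(B), R) as defined via context trees coincides with the lightest derivation weight of the statement context(B). -/
open scoped ENNReal

open Classical in
/-- The problem `R ∪ c(R)`: statements are `Sum.inl B` for the original
statements `B` and `Sum.inr B` for the statements `context(B)`.  Rules are the
original rules of `R` (on `inl` statements), the axiom `→_0 context(goal)`,
and, for each rule `A_1,...,A_n →_v C` of `R` and each index `i`, the context
rule `context(C), A_1,...,A_{i-1},A_{i+1},...,A_n →_v context(A_i)` (here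
represented with the antecedent `context(C)` placed at position `i`). -/
noncomputable def ALDP.withCtxRules (P : ALDP) (goal : P.Stmt) : ALDP where
  Stmt := P.Stmt ⊕ P.Stmt
  Rule := P.Rule ⊕ (Unit ⊕ (Σ r : P.Rule, Fin (P.n r)))
  n := fun r => match r with
    | .inl r => P.n r
    | .inr (.inl _) => 0
    | .inr (.inr ⟨r, _⟩) => P.n r
  ant := fun r => match r with
    | .inl r => fun i => .inl (P.ant r i)
    | .inr (.inl _) => Fin.elim0
    | .inr (.inr ⟨r, i⟩) => fun j => if j = i then .inr (P.concl r) else .inl (P.ant r j)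
  concl := fun r => match r with
    | .inl r => .inl (P.concl r)
    | .inr (.inl _) => .inr goal
    | .inr (.inr ⟨r, i⟩) => .inr (P.ant r i)
  v := fun r => match r with
    | .inl r => P.v r
    | .inr (.inl _) => 0
    | .inr (.inr ⟨r, _⟩) => P.v r

lemma aux_inl (P : ALDP) (goal : P.Stmt) :
    ∀ {B w}, P.Derives B w → (P.withCtxRules goal).Derives (.inl B) w := by
  intro B w h
  induction h with
  | step r w hd ih =>
    exact ALDP.Derives.step (P := P.withCtxRules goal) (Sum.inl r) w ih

lemma aux_back (P : ALDP) (goal : P.Stmt) :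
    ∀ {s w}, (P.withCtxRules goal).Derives s w →
      Sum.elim (fun B => P.Derives B w) (fun B => P.CtxDerives goal B w) s := by
  intro s w h
  induction h with
  | step r w hd ih =>
    obtain r | r | ⟨r, i⟩ := r
    · exact ALDP.Derives.step r w ih
    · have h0 : (∑ i, w i) = 0 := Finset.sum_eq_zero (fun i _ => Fin.elim0 i)
      show P.CtxDerives goal goal (0 + ∑ i, w i)
      rw [h0, add_zero]
      exact ALDP.CtxDerives.base (P := P) (goal := goal)
    · have hc : P.CtxDerives goal (P.concl r) (w i) := by
        have := ih i
        simpa [ALDP.withCtxRules] using this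
      have hd' : ∀ j, j ≠ i → P.Derives (P.ant r j) (w j) := by
        intro j hj
        have := ih j
        simp only [ALDP.withCtxRules, if_neg hj] at this
        exact this
      have := ALDP.CtxDerives.step r i (w i) w hc hd'
      simp only [ALDP.withCtxRules, Sum.elim_inr]
      convert this using 1
      change P.v r + ∑ j : Fin (P.n r), w j = _
      rw [← Finset.add_sum_erase Finset.univ (fun j : Fin (P.n r) => w j) (Finset.mem_univ i)]
      ring


/-- For additive rules `R` with context rules `c(R)`, a statement
`B` has a context of weight `u` (with respect to `goal`) if and only if
`context(B)` is derivable with weight `u` using the rules `R ∪ c(R)`; hence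
`ℓ(context(B),R)` defined via context trees coincides with the lightest
derivation weight of the statement `context(B)`. -/
theorem ctx_iff_derivable_with_ctx_rules (P : ALDP) (goal : P.Stmt) :
    (∀ (B : P.Stmt) (u : ℝ≥0∞),
      P.CtxDerives goal B u ↔ (P.withCtxRules goal).Derives (.inr B) u) ∧
    ∀ B : P.Stmt, P.ellCtx goal B = (P.withCtxRules goal).ell (.inr B) := by
  have key : ∀ (B : P.Stmt) (u : ℝ≥0∞),
      P.CtxDerives goal B u ↔ (P.withCtxRules goal).Derives (.inr B) u := by
    intro B u
    constructor
    · intro h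
      induction h with
      | base =>
        have := ALDP.Derives.step (P := P.withCtxRules goal)
          (Sum.inr (Sum.inl ())) Fin.elim0 (fun i => i.elim0)
        exact (fun (a b : ℝ≥0∞) (h : a = b) (d : (P.withCtxRules goal).Derives (Sum.inr goal) a) =>
            cast (congrArg ((P.withCtxRules goal).Derives (Sum.inr goal)) h) d)
          _ _ ((zero_add _).trans (Finset.sum_eq_zero (fun i _ => Fin.elim0 i))) this
      | step r i u w hc hd ih =>
        have hant : ∀ j : Fin (P.n r), (P.withCtxRules goal).Derives
            ((P.withCtxRules goal).ant (Sum.inr (Sum.inr ⟨r, i⟩)) j)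
            (if j = i then u else w j) := by
          intro j
          by_cases hj : j = i
          · simpa [ALDP.withCtxRules, hj] using ih
          · simpa [ALDP.withCtxRules, hj] using aux_inl P goal (hd j hj)
        have := ALDP.Derives.step (P := P.withCtxRules goal)
          (Sum.inr (Sum.inr ⟨r, i⟩)) _ hant
        have hw : P.v r + ∑ j, (if j = i then u else w j)
            = u + P.v r + ∑ j ∈ Finset.univ.erase i, w j := by
          rw [← Finset.add_sum_erase _ _ (Finset.mem_univ i)]
          have : ∑ j ∈ Finset.univ.erase i, (if j = i then u else w j)
              = ∑ j ∈ Finset.univ.erase i, w j :=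
            Finset.sum_congr rfl (fun j hj => by
              simp [Finset.ne_of_mem_erase hj])
          rw [this]; simp; ring
        simp only [ALDP.withCtxRules] at this
        exact (fun (a b : ℝ≥0∞) (h : a = b) (d : (P.withCtxRules goal).Derives (Sum.inr (P.ant r i)) a) =>
            cast (congrArg ((P.withCtxRules goal).Derives (Sum.inr (P.ant r i))) h) d)
          _ _ hw this
    · intro h
      simpa using aux_back P goal h
  refine ⟨key, fun B => ?_⟩
  unfold ALDP.ellCtx ALDP.ell
  congr 1
  ext u
  exact key B u
end

section
/- In the hierarchical A* lightest derivation algorithm, for each rule with antecedents Φ_1,...,Φ_m and conclusion Ψ, if each antecedent weight equals ℓ(Φ_i) and the conclusion weight is α, then (a) the rule's priority equals α + h(Ψ), and (b) α + h(Ψ) ≥ p(Φ_i) for every antecedent, where p(Φ) = ℓ(Φ) + h(Φ). -/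
open scoped ENNReal

private lemma key_sInf {ι : Type*} (s : Finset ι) (S : ι → Set ℝ≥0∞) (T : Set ℝ≥0∞) (c : ℝ≥0∞)
    (h : ∀ w : ι → ℝ≥0∞, (∀ i ∈ s, w i ∈ S i) → (c + ∑ i ∈ s, w i) ∈ T) :
    sInf T ≤ c + ∑ i ∈ s, sInf (S i) := by
  refine ENNReal.le_of_forall_pos_le_add fun ε hε hfin => ?_
  have hlt : ∀ i ∈ s, sInf (S i) < ⊤ := by
    intro i hi
    calc sInf (S i) ≤ ∑ i ∈ s, sInf (S i) := Finset.single_le_sum (f := fun i => sInf (S i)) (fun _ _ => zero_le) hi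
      _ ≤ c + ∑ i ∈ s, sInf (S i) := le_add_self
      _ < ⊤ := hfin
  have hne : ∀ i ∈ s, (S i).Nonempty := by
    intro i hi
    by_contra hemp
    rw [Set.not_nonempty_iff_eq_empty] at hemp
    have := hlt i hi
    rw [hemp] at this
    simp at this
  set n := s.card with hncard
  rcases Nat.eq_zero_or_pos n with hn | hn
  · rw [hncard, Finset.card_eq_zero] at hn
    subst hn
    simpa using le_trans (sInf_le (h (fun _ => 0) (by simp))) le_self_add
  · have hδ : (0:ℝ≥0∞) < ε / n := ENNReal.div_pos (by exact_mod_cast hε.ne') (by simp)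
    have hchoice : ∀ i ∈ s, ∃ w, w ∈ S i ∧ w ≤ sInf (S i) + ε / n := by
      intro i hi
      have hstep : sInf (S i) < sInf (S i) + ε / n :=
        ENNReal.lt_add_right (hlt i hi).ne hδ.ne'
      rcases exists_lt_of_csInf_lt (hne i hi) hstep with ⟨w, hw, hltw⟩
      exact ⟨w, hw, hltw.le⟩
    choose! w hw hwle using hchoice
    calc sInf T ≤ c + ∑ i ∈ s, w i := sInf_le (h w hw)
      _ ≤ c + ∑ i ∈ s, (sInf (S i) + ε / n) := by
          gcongr with i hi; exact hwle i hi
      _ = c + (∑ i ∈ s, sInf (S i) + n * (ε / n)) := by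
          rw [Finset.sum_add_distrib]; simp [mul_comm, ← hncard]
      _ ≤ c + ∑ i ∈ s, sInf (S i) + ε := by
          rw [← add_assoc]; gcongr; exact ENNReal.mul_div_le


namespace ALDP

lemma ell_le_rule (P : ALDP) (r : P.Rule) :
    P.ell (P.concl r) ≤ P.v r + ∑ i, P.ell (P.ant r i) := by
  apply key_sInf
  intro w hw
  exact Derives.step r w (fun i => hw i (Finset.mem_univ i))

lemma ellCtx_le_step (P : ALDP) (goal : P.Stmt) (r : P.Rule) (i : Fin (P.n r)) :
    P.ellCtx goal (P.ant r i) ≤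
      P.ellCtx goal (P.concl r) + P.v r + ∑ j ∈ Finset.univ.erase i, P.ell (P.ant r j) := by
  have h1 : ∀ u ∈ {u | P.CtxDerives goal (P.concl r) u},
      P.ellCtx goal (P.ant r i) ≤ u + (P.v r + ∑ j ∈ Finset.univ.erase i, P.ell (P.ant r j)) := by
    intro u hu
    rw [← add_assoc]
    have := key_sInf (Finset.univ.erase i) (fun j => {w | P.Derives (P.ant r j) w})
      {w | P.CtxDerives goal (P.ant r i) w} (u + P.v r) ?_
    · exact le_trans this (by rfl)
    · intro w hw
      exact CtxDerives.step r i u w hu (fun j hj => hw j (by simp [hj]))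
  have h2 : P.ellCtx goal (P.ant r i) ≤
      sInf {u | P.CtxDerives goal (P.concl r) u} +
        (P.v r + ∑ j ∈ Finset.univ.erase i, P.ell (P.ant r j)) := by
    rw [sInf_eq_iInf, ENNReal.iInf_add]
    refine le_iInf fun u => ?_
    rw [ENNReal.iInf_add]
    exact le_iInf fun hu => h1 u hu
  rw [add_assoc]
  exact h2

lemma ellCtx_self (P : ALDP) (g : P.Stmt) : P.ellCtx g g = 0 :=
  le_antisymm (sInf_le CtxDerives.base) zero_le

lemma Derives.abs_lift {P Q : ALDP} {abs : P.Stmt → Q.Stmt} (hA : IsAbstraction P Q abs)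
    {B : P.Stmt} {w : ℝ≥0∞} (hd : P.Derives B w) :
    ∃ w' ≤ w, Q.Derives (abs B) w' := by
  induction hd with
  | step r w hd ih =>
    choose w' hle hder using ih
    obtain ⟨r', e, hant, hconcl, hv⟩ := hA r
    refine ⟨Q.v r' + ∑ j, w' (Fin.cast e j), ?_, ?_⟩
    · have hsum : ∑ j : Fin (Q.n r'), w' (Fin.cast e j) = ∑ i, w' i :=
        Fintype.sum_equiv (finCongr e) _ _ (fun j => rfl)
      rw [hsum]
      gcongr with i
      exact hle i
    · rw [← hconcl]
      refine Derives.step r' (fun j => w' (Fin.cast e j)) (fun j => ?_)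
      have h1 : Q.ant r' j = abs (P.ant r (Fin.cast e j)) := by
        have := hant (Fin.cast e j)
        simpa using this
      rw [h1]
      exact hder _

lemma abs_ell_le {P Q : ALDP} {abs : P.Stmt → Q.Stmt} (hA : IsAbstraction P Q abs)
    (B : P.Stmt) : Q.ell (abs B) ≤ P.ell B := by
  refine le_sInf fun w hw => ?_
  obtain ⟨w', hle, hd'⟩ := Derives.abs_lift hA hw
  exact le_trans (sInf_le hd') hle

lemma CtxDerives.abs_lift {P Q : ALDP} {abs : P.Stmt → Q.Stmt} (hA : IsAbstraction P Q abs)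
    {g B : P.Stmt} {u : ℝ≥0∞} (hc : P.CtxDerives g B u) :
    ∃ u' ≤ u, Q.CtxDerives (abs g) (abs B) u' := by
  induction hc with
  | base => exact ⟨0, le_rfl, CtxDerives.base⟩
  | step r i u w hc hd ih =>
    obtain ⟨u', hu', hc'⟩ := ih
    obtain ⟨r', e, hant, hconcl, hv⟩ := hA r
    have hda : ∀ j, ∃ w', (j ≠ i → w' ≤ w j ∧ Q.Derives (abs (P.ant r j)) w') := by
      intro j
      by_cases hj : j = i
      · exact ⟨0, fun h => absurd hj h⟩
      · obtain ⟨w'', hle, hd'⟩ := Derives.abs_lift hA (hd j hj)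
        exact ⟨w'', fun _ => ⟨hle, hd'⟩⟩
    choose w' hw' using hda
    have hi' : Fin.cast e (Fin.cast e.symm i) = i := by simp
    have hne : ∀ j : Fin (Q.n r'), j ≠ Fin.cast e.symm i ↔ Fin.cast e j ≠ i := by
      intro j
      constructor
      · intro h h2
        exact h (by simpa using congrArg (Fin.cast e.symm) h2)
      · intro h h2
        exact h (by rw [h2]; simp)
    refine ⟨u' + Q.v r' + ∑ j ∈ Finset.univ.erase (Fin.cast e.symm i), w' (Fin.cast e j), ?_, ?_⟩
    · have hsum : ∑ j ∈ Finset.univ.erase (Fin.cast e.symm i), w' (Fin.cast e j) =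
          ∑ j ∈ Finset.univ.erase i, w' j := by
        refine Finset.sum_equiv (finCongr e) (fun j => ?_) (fun j _ => rfl)
        simp only [Finset.mem_erase, Finset.mem_univ, and_true]
        exact hne j
      rw [hsum]
      gcongr with j hj
      exact (hw' j (Finset.mem_erase.1 hj).1).1
    · have hc'' : Q.CtxDerives (abs g) (Q.concl r') u' := by rw [hconcl]; exact hc'
      have hstep := CtxDerives.step (P := Q) r' (Fin.cast e.symm i) u'
        (fun j => w' (Fin.cast e j)) hc'' ?_
      · have haq : Q.ant r' (Fin.cast e.symm i) = abs (P.ant r i) := hant i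
        rwa [haq] at hstep
      · intro j hj
        have h1 : Q.ant r' j = abs (P.ant r (Fin.cast e j)) := by
          have := hant (Fin.cast e j)
          simpa using this
        rw [h1]
        exact ((hw' (Fin.cast e j)) ((hne j).1 hj)).2

lemma abs_ellCtx_le {P Q : ALDP} {abs : P.Stmt → Q.Stmt} (hA : IsAbstraction P Q abs)
    (g B : P.Stmt) : Q.ellCtx (abs g) (abs B) ≤ P.ellCtx g B := by
  refine le_sInf fun u hu => ?_
  obtain ⟨u', hle, hc'⟩ := CtxDerives.abs_lift hA hu
  exact le_trans (sInf_le hc') hle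

lemma abs_ell_rule {P Q : ALDP} {abs : P.Stmt → Q.Stmt} (hA : IsAbstraction P Q abs)
    (r : P.Rule) :
    Q.ell (abs (P.concl r)) ≤ P.v r + ∑ i, Q.ell (abs (P.ant r i)) := by
  obtain ⟨r', e, hant, hconcl, hv⟩ := hA r
  have h1 := Q.ell_le_rule r'
  rw [hconcl] at h1
  have hsum : ∑ j : Fin (Q.n r'), Q.ell (Q.ant r' j) = ∑ i, Q.ell (abs (P.ant r i)) := by
    refine Fintype.sum_equiv (finCongr e) _ _ (fun j => ?_)
    simp only [finCongr_apply]
    rw [← hant (Fin.cast e j)]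
    simp
  rw [hsum] at h1
  exact le_trans h1 (by gcongr)

lemma abs_ellCtx_rule {P Q : ALDP} {abs : P.Stmt → Q.Stmt} (hA : IsAbstraction P Q abs)
    (g' : Q.Stmt) (r : P.Rule) (i : Fin (P.n r)) :
    Q.ellCtx g' (abs (P.ant r i)) ≤
      Q.ellCtx g' (abs (P.concl r)) + P.v r +
        ∑ j ∈ Finset.univ.erase i, Q.ell (abs (P.ant r j)) := by
  obtain ⟨r', e, hant, hconcl, hv⟩ := hA r
  have h1 := Q.ellCtx_le_step g' r' (Fin.cast e.symm i)
  rw [hconcl, hant i] at h1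
  have hne : ∀ j : Fin (Q.n r'), j ≠ Fin.cast e.symm i ↔ Fin.cast e j ≠ i := by
    intro j
    constructor
    · intro h h2
      exact h (by simpa using congrArg (Fin.cast e.symm) h2)
    · intro h h2
      exact h (by rw [h2]; simp)
  have hsum : ∑ j ∈ Finset.univ.erase (Fin.cast e.symm i), Q.ell (Q.ant r' j) =
      ∑ j ∈ Finset.univ.erase i, Q.ell (abs (P.ant r j)) := by
    refine Finset.sum_equiv (finCongr e) (fun j => ?_) (fun j _ => ?_)
    · simp only [Finset.mem_erase, Finset.mem_univ, and_true]
      exact hne j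
    · simp only [finCongr_apply]
      rw [← hant (Fin.cast e j)]
      simp
  rw [hsum] at h1
  exact le_trans h1 (by gcongr)

end ALDP

/-- An abstraction hierarchy with `m` levels: additive lightest derivation
problems `(Σ_k, R_k)` for `0 ≤ k ≤ m-1`, goal statements `goal_k`, and
abstraction maps `abs : Σ_k → Σ_{k+1}` such that each level abstracts the one
below and `goal_{k+1} = abs(goal_k)`.  (The most abstract level `Σ_m = {⊥}` is
represented separately below.) -/
structure Hier (m : ℕ) where
  P : Fin m → ALDP
  goal : (k : Fin m) → (P k).Stmt
  abs : (k : Fin m) → (hk : k.1 + 1 < m) → (P k).Stmt → (P ⟨k.1 + 1, hk⟩).Stmt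
  hgoal : ∀ (k : Fin m) (hk : k.1 + 1 < m), goal ⟨k.1 + 1, hk⟩ = abs k hk (goal k)
  habs : ∀ (k : Fin m) (hk : k.1 + 1 < m),
    ALDP.IsAbstraction (P k) (P ⟨k.1 + 1, hk⟩) (abs k hk)

/-- Generalized statements: statements `C ∈ Σ_k`, contexts `context(C)` for
`C ∈ Σ_k`, the most abstract statement `⊥ ∈ Σ_m`, and `context(⊥)`. -/
inductive GStmt {m : ℕ} (H : Hier m) : Type
  | stmt (k : Fin m) (C : (H.P k).Stmt)
  | ctx (k : Fin m) (C : (H.P k).Stmt)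
  | bot
  | botctx

namespace Hier

variable {m : ℕ} (H : Hier m)

/-- `ℓ(Φ)`: the lightest derivation weight for statements, the lightest
context weight for contexts (at the appropriate level), and `0` for `⊥` and
`context(⊥)`. -/
noncomputable def ellG : GStmt H → ℝ≥0∞
  | .stmt k C => (H.P k).ell C
  | .ctx k C => (H.P k).ellCtx (H.goal k) C
  | .bot => 0
  | .botctx => 0

/-- The generalized statement `context(abs(C))` for `C ∈ Σ_k`: it lives one
level up, or is `context(⊥)` if `k` is the most abstract concrete level. -/
noncomputable def absCtx (k : Fin m) (C : (H.P k).Stmt) : GStmt H :=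
  if hk : k.1 + 1 < m then .ctx ⟨k.1 + 1, hk⟩ (H.abs k hk C) else .botctx

/-- The heuristic: `h(C) = ℓ(context(abs(C)))`, `h(context(C)) = ℓ(C)`, and
`h(⊥) = h(context(⊥)) = 0`. -/
noncomputable def hG : GStmt H → ℝ≥0∞
  | .stmt k C => H.ellG (H.absCtx k C)
  | .ctx k C => (H.P k).ell C
  | .bot => 0
  | .botctx => 0

/-- The intrinsic priority `p(Φ) = ℓ(Φ) + h(Φ)`. -/
noncomputable def pG (Φ : GStmt H) : ℝ≥0∞ := H.ellG Φ + H.hG Φ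

end Hier


namespace Hier

variable {m : ℕ} (H : Hier m)

lemma ellG_absCtx_le (k : Fin m) (B : (H.P k).Stmt) :
    H.ellG (H.absCtx k B) ≤ (H.P k).ellCtx (H.goal k) B := by
  unfold Hier.absCtx
  split_ifs with hk
  · simp only [Hier.ellG]
    rw [H.hgoal k hk]
    exact ALDP.abs_ellCtx_le (H.habs k hk) _ _
  · exact zero_le

lemma hG_absCtx_concl_le (k : Fin m) (r : (H.P k).Rule) :
    H.hG (H.absCtx k ((H.P k).concl r)) ≤
      (H.P k).v r + ∑ i, (H.P k).ell ((H.P k).ant r i) := by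
  unfold Hier.absCtx
  split_ifs with hk
  · simp only [Hier.hG]
    calc (H.P ⟨k.1 + 1, hk⟩).ell (H.abs k hk ((H.P k).concl r))
        ≤ (H.P k).v r + ∑ i, (H.P ⟨k.1 + 1, hk⟩).ell (H.abs k hk ((H.P k).ant r i)) :=
          ALDP.abs_ell_rule (H.habs k hk) r
      _ ≤ _ := by
          gcongr with i _
          exact ALDP.abs_ell_le (H.habs k hk) _
  · exact zero_le

lemma ellG_absCtx_ant_le (k : Fin m) (r : (H.P k).Rule) (i : Fin ((H.P k).n r)) :
    (H.P k).ell ((H.P k).ant r i) + H.ellG (H.absCtx k ((H.P k).ant r i)) ≤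
      ((H.P k).v r + ∑ j, (H.P k).ell ((H.P k).ant r j)) +
        H.ellG (H.absCtx k ((H.P k).concl r)) := by
  unfold Hier.absCtx
  split_ifs with hk
  · simp only [Hier.ellG]
    have h1 := ALDP.abs_ellCtx_rule (H.habs k hk) (H.goal ⟨k.1 + 1, hk⟩) r i
    have h2 : (H.P ⟨k.1 + 1, hk⟩).ellCtx (H.goal ⟨k.1 + 1, hk⟩) (H.abs k hk ((H.P k).ant r i)) ≤
        (H.P ⟨k.1 + 1, hk⟩).ellCtx (H.goal ⟨k.1 + 1, hk⟩) (H.abs k hk ((H.P k).concl r)) +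
          (H.P k).v r + ∑ j ∈ Finset.univ.erase i, (H.P k).ell ((H.P k).ant r j) := by
      refine le_trans h1 ?_
      gcongr with j _
      exact ALDP.abs_ell_le (H.habs k hk) _
    calc (H.P k).ell ((H.P k).ant r i) +
          (H.P ⟨k.1 + 1, hk⟩).ellCtx (H.goal ⟨k.1 + 1, hk⟩) (H.abs k hk ((H.P k).ant r i))
        ≤ (H.P k).ell ((H.P k).ant r i) +
          ((H.P ⟨k.1 + 1, hk⟩).ellCtx (H.goal ⟨k.1 + 1, hk⟩) (H.abs k hk ((H.P k).concl r)) +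
            (H.P k).v r + ∑ j ∈ Finset.univ.erase i, (H.P k).ell ((H.P k).ant r j)) := by
          gcongr
      _ = ((H.P k).v r + ∑ j, (H.P k).ell ((H.P k).ant r j)) +
          (H.P ⟨k.1 + 1, hk⟩).ellCtx (H.goal ⟨k.1 + 1, hk⟩) (H.abs k hk ((H.P k).concl r)) := by
          rw [← Finset.add_sum_erase _ _ (Finset.mem_univ i)]
          ring
  · simp only [Hier.ellG, add_zero]
    calc (H.P k).ell ((H.P k).ant r i) ≤ ∑ j, (H.P k).ell ((H.P k).ant r j) :=
          Finset.single_le_sum (f := fun j => (H.P k).ell ((H.P k).ant r j))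
            (fun _ _ => zero_le) (Finset.mem_univ i)
      _ ≤ _ := le_add_self

end Hier

open Hier in
/-- HA*LD monotonicity lemma: for each HA*LD rule with
antecedents `Φ_1,...,Φ_m` and conclusion `Ψ`, if each antecedent weight equals
`ℓ(Φ_i)` and the conclusion weight is `α`, then (a) the rule's priority equals
`α + h(Ψ)`, and (b) `α + h(Ψ) ≥ p(Φ_i)` for every antecedent, where
`p(Φ) = ℓ(Φ) + h(Φ)`.  (The cases below are the BASE, UP and DOWN rules; the
START rules have no antecedents and priority `0 = 0 + h(Ψ)`.) -/
theorem hald_monotonicity (m : ℕ) (H : Hier m) :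
    -- BASE: antecedent goal_k at weight ℓ(goal_k), conclusion
    -- context(goal_k) at weight α = 0, priority ℓ(goal_k)
    (∀ k : Fin m,
      ((H.P k).ell (H.goal k) = 0 + H.hG (.ctx k (H.goal k))) ∧
      0 + H.hG (.ctx k (H.goal k)) ≥ H.pG (.stmt k (H.goal k))) ∧
    -- UP: antecedents context(abs(C)) at weight w_c = ℓ(context(abs(C))) and
    -- A_i at weight ℓ(A_i); conclusion C at weight α = v + Σ ℓ(A_i);
    -- priority α + w_c
    (∀ (k : Fin m) (r : (H.P k).Rule),
      ((H.P k).v r + (∑ i, (H.P k).ell ((H.P k).ant r i)) +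
          H.ellG (H.absCtx k ((H.P k).concl r)) =
        ((H.P k).v r + ∑ i, (H.P k).ell ((H.P k).ant r i)) +
          H.hG (.stmt k ((H.P k).concl r))) ∧
      (((H.P k).v r + ∑ i, (H.P k).ell ((H.P k).ant r i)) +
          H.hG (.stmt k ((H.P k).concl r)) ≥
        H.pG (H.absCtx k ((H.P k).concl r))) ∧
      (∀ i, ((H.P k).v r + ∑ i, (H.P k).ell ((H.P k).ant r i)) +
          H.hG (.stmt k ((H.P k).concl r)) ≥
        H.pG (.stmt k ((H.P k).ant r i)))) ∧
    -- DOWN: antecedents context(C) at weight w_c = ℓ(context(C)) and A_j at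
    -- weight ℓ(A_j); conclusion context(A_i) at weight
    -- α = v + w_c + Σ_{j≠i} ℓ(A_j); priority v + w_c + Σ_j ℓ(A_j)
    (∀ (k : Fin m) (r : (H.P k).Rule) (i : Fin ((H.P k).n r)),
      ((H.P k).v r + (H.P k).ellCtx (H.goal k) ((H.P k).concl r) +
          (∑ j, (H.P k).ell ((H.P k).ant r j)) =
        ((H.P k).v r + (H.P k).ellCtx (H.goal k) ((H.P k).concl r) +
          ∑ j ∈ Finset.univ.erase i, (H.P k).ell ((H.P k).ant r j)) +
          H.hG (.ctx k ((H.P k).ant r i))) ∧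
      ((H.P k).v r + (H.P k).ellCtx (H.goal k) ((H.P k).concl r) +
          (∑ j, (H.P k).ell ((H.P k).ant r j)) ≥
        H.pG (.ctx k ((H.P k).concl r))) ∧
      (∀ j, (H.P k).v r + (H.P k).ellCtx (H.goal k) ((H.P k).concl r) +
          (∑ j, (H.P k).ell ((H.P k).ant r j)) ≥
        H.pG (.stmt k ((H.P k).ant r j)))) := by
  refine ⟨fun k => ⟨by simp [Hier.hG], ?_⟩, fun k r => ⟨?_, ?_, ?_⟩, fun k r i => ⟨?_, ?_, ?_⟩⟩
  · -- BASE (b)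
    have h0 : H.ellG (H.absCtx k (H.goal k)) = 0 :=
      le_antisymm (by simpa [ALDP.ellCtx_self] using H.ellG_absCtx_le k (H.goal k)) zero_le
    show H.ellG (GStmt.stmt k (H.goal k)) + H.ellG (H.absCtx k (H.goal k)) ≤
      0 + H.hG (GStmt.ctx k (H.goal k))
    rw [h0]
    simp [Hier.ellG, Hier.hG]
  · -- UP (a)
    simp [Hier.hG]
  · -- UP (b1)
    simp only [Hier.pG, Hier.hG, ge_iff_le]
    calc H.ellG (H.absCtx k ((H.P k).concl r)) + H.hG (H.absCtx k ((H.P k).concl r))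
        ≤ H.ellG (H.absCtx k ((H.P k).concl r)) +
            ((H.P k).v r + ∑ i, (H.P k).ell ((H.P k).ant r i)) := by
          gcongr
          exact H.hG_absCtx_concl_le k r
      _ = _ := add_comm _ _
  · -- UP (b2)
    intro i
    simp only [Hier.pG, Hier.hG, Hier.ellG, ge_iff_le]
    exact H.ellG_absCtx_ant_le k r i
  · -- DOWN (a)
    simp only [Hier.hG]
    rw [← Finset.add_sum_erase _ _ (Finset.mem_univ i)]
    ring
  · -- DOWN (b1)
    simp only [Hier.pG, Hier.hG, Hier.ellG, ge_iff_le]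
    calc (H.P k).ellCtx (H.goal k) ((H.P k).concl r) + (H.P k).ell ((H.P k).concl r)
        ≤ (H.P k).ellCtx (H.goal k) ((H.P k).concl r) +
            ((H.P k).v r + ∑ j, (H.P k).ell ((H.P k).ant r j)) := by
          gcongr
          exact (H.P k).ell_le_rule r
      _ = _ := by ring
  · -- DOWN (b2)
    intro j
    simp only [Hier.pG, Hier.hG, Hier.ellG, ge_iff_le]
    have h1 : H.ellG (H.absCtx k ((H.P k).ant r j)) ≤
        (H.P k).ellCtx (H.goal k) ((H.P k).concl r) + (H.P k).v r +
          ∑ j' ∈ Finset.univ.erase j, (H.P k).ell ((H.P k).ant r j') :=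
      le_trans (H.ellG_absCtx_le k _) ((H.P k).ellCtx_le_step (H.goal k) r j)
    calc (H.P k).ell ((H.P k).ant r j) + H.ellG (H.absCtx k ((H.P k).ant r j))
        ≤ (H.P k).ell ((H.P k).ant r j) +
            ((H.P k).ellCtx (H.goal k) ((H.P k).concl r) + (H.P k).v r +
              ∑ j' ∈ Finset.univ.erase j, (H.P k).ell ((H.P k).ant r j')) := by
          gcongr
      _ = _ := by
          rw [← Finset.add_sum_erase _ _ (Finset.mem_univ j)]
          ring
end

section
/- If h is a perfect heuristic for an additive lightest derivation problem, i.e., h(B) = ℓ(context(B),R) for all B, then every statement expanded by A*LD before goal is expanded appears in some lightest derivation of goal; equivalently, A*LD only expands statements B with ℓ(B,R) + ℓ(context(B),R) ≤ ℓ(goal,R). -/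
open scoped ENNReal

attribute [local instance] Classical.propDecidable

namespace ALDP

variable (P : ALDP)

/-- A state of the A*LD execution: the set `S` of expanded weight assignments
and the priority queue `Q` of pending weight assignments with priorities. -/
abbrev State := (P.Stmt → Option ℝ≥0∞) × Set (P.Stmt × ℝ≥0∞ × ℝ≥0∞)

/-- A*LD prioritizes each additive rule `A_1,...,A_n →_v C` at
`v + w_1 + ... + w_n + h(C)`. -/
noncomputable def prio (h : P.Stmt → ℝ≥0∞) (r : P.Rule)
    (w : Fin (P.n r) → ℝ≥0∞) : ℝ≥0∞ :=
  P.v r + (∑ i, w i) + h (P.concl r)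

/-- The initial queue: assignments defined by rules with no antecedents. -/
def initQ (h : P.Stmt → ℝ≥0∞) : Set (P.Stmt × ℝ≥0∞ × ℝ≥0∞) :=
  {x | ∃ (r : P.Rule) (_ : P.n r = 0) (w : Fin (P.n r) → ℝ≥0∞),
    x = (P.concl r, P.v r + ∑ i, w i, P.prio h r w)}

def init (h : P.Stmt → ℝ≥0∞) : P.State := (fun _ => none, P.initQ h)

/-- Assignments derivable in one rule step from `(B = ·)` and `S`. -/
noncomputable def newItems (h : P.Stmt → ℝ≥0∞) (S : P.Stmt → Option ℝ≥0∞)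
    (B : P.Stmt) : Set (P.Stmt × ℝ≥0∞ × ℝ≥0∞) :=
  {x | ∃ (r : P.Rule) (w : Fin (P.n r) → ℝ≥0∞),
      (∀ i, S (P.ant r i) = some (w i)) ∧ (∃ i, P.ant r i = B) ∧
      x = (P.concl r, P.v r + ∑ i, w i, P.prio h r w)}

/-- One iteration of the A*LD procedure. -/
inductive Step (h : P.Stmt → ℝ≥0∞) : P.State → P.State → Prop
  | skip (S : P.Stmt → Option ℝ≥0∞) (Q : Set (P.Stmt × ℝ≥0∞ × ℝ≥0∞))
      (B : P.Stmt) (w q : ℝ≥0∞)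
      (hmem : (B, w, q) ∈ Q) (hmin : ∀ x ∈ Q, q ≤ x.2.2)
      (hold : S B ≠ none) :
      Step h (S, Q) (S, Q \ {(B, w, q)})
  | expand (S : P.Stmt → Option ℝ≥0∞) (Q : Set (P.Stmt × ℝ≥0∞ × ℝ≥0∞))
      (B : P.Stmt) (w q : ℝ≥0∞)
      (hmem : (B, w, q) ∈ Q) (hmin : ∀ x ∈ Q, q ≤ x.2.2)
      (hnew : S B = none) :
      Step h (S, Q) (Function.update S B (some w),
        (Q \ {(B, w, q)}) ∪ P.newItems h (Function.update S B (some w)) B)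

/-- The reachable states of the A*LD execution. -/
inductive Reaches (h : P.Stmt → ℝ≥0∞) : P.State → Prop
  | init : Reaches h (P.init h)
  | step (s s' : P.State) (hr : Reaches h s) (hs : P.Step h s s') :
      Reaches h s'

end ALDP

namespace ALDP

variable {P : ALDP} {goal : P.Stmt} {h : P.Stmt → ℝ≥0∞}

lemma ellCtx_goal_self : P.ellCtx goal goal = 0 :=
  le_antisymm (sInf_le CtxDerives.base) zero_le

lemma ellCtx_ant_le (r : P.Rule) (w : Fin (P.n r) → ℝ≥0∞)
    (hd : ∀ j, P.Derives (P.ant r j) (w j)) (i : Fin (P.n r)) :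
    P.ellCtx goal (P.ant r i) ≤
      P.ellCtx goal (P.concl r) + (P.v r + ∑ j ∈ Finset.univ.erase i, w j) := by
  simp only [ellCtx]
  rw [ENNReal.sInf_add]
  refine le_iInf₂ fun u hu => ?_
  have := CtxDerives.step (P := P) (goal := goal) r i u w hu (fun j _ => hd j)
  calc sInf {u | P.CtxDerives goal (P.ant r i) u}
      ≤ u + P.v r + ∑ j ∈ Finset.univ.erase i, w j := sInf_le this
    _ = u + (P.v r + ∑ j ∈ Finset.univ.erase i, w j) := by ring

lemma mono_perfect (r : P.Rule) (w : Fin (P.n r) → ℝ≥0∞)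
    (hd : ∀ j, P.Derives (P.ant r j) (w j)) (i : Fin (P.n r)) :
    w i + P.ellCtx goal (P.ant r i) ≤
      P.v r + (∑ j, w j) + P.ellCtx goal (P.concl r) := by
  calc w i + P.ellCtx goal (P.ant r i)
      ≤ w i + (P.ellCtx goal (P.concl r) + (P.v r + ∑ j ∈ Finset.univ.erase i, w j)) :=
        add_le_add_right (ellCtx_ant_le r w hd i) _
    _ = P.v r + (w i + ∑ j ∈ Finset.univ.erase i, w j) + P.ellCtx goal (P.concl r) := by ring
    _ = P.v r + (∑ j, w j) + P.ellCtx goal (P.concl r) := by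
        rw [Finset.add_sum_erase _ _ (Finset.mem_univ i)]

/-- The A*LD invariant. -/
def Inv (P : ALDP) (h : P.Stmt → ℝ≥0∞) (s : P.State) : Prop :=
  (∀ C u, s.1 C = some u → P.Derives C u) ∧
  (∀ C u, s.1 C = some u → ∀ w, P.Derives C w → u + h C ≤ w + h C) ∧
  (∀ x ∈ s.2, P.Derives x.1 x.2.1 ∧ x.2.2 = x.2.1 + h x.1) ∧
  (∀ (r : P.Rule) (u : Fin (P.n r) → ℝ≥0∞), (∀ i, s.1 (P.ant r i) = some (u i)) →
    s.1 (P.concl r) ≠ none ∨ (P.concl r, P.v r + ∑ i, u i, P.prio h r u) ∈ s.2)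

lemma frontier (hperf : ∀ B, h B = P.ellCtx goal B) {s : P.State} (hinv : Inv P h s)
    {C : P.Stmt} {w : ℝ≥0∞} (hd : P.Derives C w) :
    s.1 C ≠ none ∨ ∃ x ∈ s.2, x.2.2 ≤ w + h C := by
  induction hd with
  | step r wf hdf IH =>
    by_cases hC : s.1 (P.concl r) = none
    · by_cases hall : ∃ i, s.1 (P.ant r i) = none
      · obtain ⟨i, hi⟩ := hall
        rcases IH i with hne | ⟨x, hx, hxle⟩
        · exact absurd hi hne
        · refine Or.inr ⟨x, hx, hxle.trans ?_⟩
          rw [hperf, hperf]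
          exact mono_perfect r wf hdf i
      · push_neg at hall
        have hall' : ∀ i, ∃ u, s.1 (P.ant r i) = some u := by
          intro i
          cases hsi : s.1 (P.ant r i) with
          | none => exact absurd hsi (hall i)
          | some u => exact ⟨u, rfl⟩
        choose u hu using hall'
        rcases hinv.2.2.2 r u hu with hne | hitem
        · exact absurd hC hne
        · refine Or.inr ⟨_, hitem, ?_⟩
          show P.prio h r u ≤ _
          rw [prio]
          by_cases htop : P.v r + (∑ j, wf j) + h (P.concl r) = ⊤
          · exact htop ▸ le_top
          · have hui : ∀ i, u i ≤ wf i := by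
              intro i
              have hK := hinv.2.1 _ _ (hu i) _ (hdf i)
              have hle : h (P.ant r i) ≤ P.v r + (∑ j, wf j) + h (P.concl r) := by
                rw [hperf, hperf]
                calc P.ellCtx goal (P.ant r i)
                    ≤ P.ellCtx goal (P.concl r) +
                        (P.v r + ∑ j ∈ Finset.univ.erase i, wf j) :=
                      ellCtx_ant_le r wf hdf i
                  _ ≤ P.ellCtx goal (P.concl r) + (P.v r + ∑ j, wf j) :=
                      add_le_add_right (add_le_add_right
                        (Finset.sum_le_sum_of_subset (Finset.erase_subset _ _)) _) _
                  _ = P.v r + (∑ j, wf j) + P.ellCtx goal (P.concl r) := by ring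
              have hfin : h (P.ant r i) ≠ ⊤ := ne_top_of_le_ne_top htop hle
              exact (ENNReal.add_le_add_iff_right hfin).mp hK
            gcongr with i
            exact hui i
    · exact Or.inl hC

lemma inv_init : Inv P h (P.init h) := by
  refine ⟨fun C u hCu => by simp [init] at hCu,
          fun C u hCu => by simp [init] at hCu, ?_, ?_⟩
  · rintro x ⟨r, hn, w, rfl⟩
    exact ⟨Derives.step r w (fun i => (Fin.cast hn i).elim0), rfl⟩
  · intro r u hu
    by_cases hn : P.n r = 0
    · exact Or.inr ⟨r, hn, u, rfl⟩
    · have := hu ⟨0, Nat.pos_of_ne_zero hn⟩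
      simp [init] at this

lemma inv_step (hperf : ∀ B, h B = P.ellCtx goal B) {s s' : P.State}
    (hinv : Inv P h s) (hs : P.Step h s s') : Inv P h s' := by
  cases hs with
  | skip S Q B w q hmem hmin hold =>
    refine ⟨hinv.1, hinv.2.1, fun x hx => hinv.2.2.1 x hx.1, ?_⟩
    intro r u hu
    rcases hinv.2.2.2 r u hu with hne | hitem
    · exact Or.inl hne
    · by_cases heq : (P.concl r, P.v r + ∑ i, u i, P.prio h r u) = (B, w, q)
      · exact Or.inl (by rw [show P.concl r = B from congrArg Prod.fst heq]; exact hold)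
      · exact Or.inr ⟨hitem, heq⟩
  | expand S Q B wB q hmem hmin hnew =>
    have hq : q = wB + h B := (hinv.2.2.1 _ hmem).2
    have hdB : P.Derives B wB := (hinv.2.2.1 _ hmem).1
    have hN : ∀ C u, Function.update S B (some wB) C = some u → P.Derives C u := by
      intro C u hCu
      by_cases hCB : C = B
      · subst hCB
        rw [Function.update_self] at hCu
        exact (Option.some_inj.mp hCu) ▸ hdB
      · rw [Function.update_of_ne hCB] at hCu
        exact hinv.1 _ _ hCu
    refine ⟨hN, ?_, ?_, ?_⟩
    · intro C u hCu w' hd'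
      by_cases hCB : C = B
      · subst hCB
        replace hCu : Function.update S C (some wB) C = some u := hCu
        rw [Function.update_self] at hCu
        rcases frontier hperf hinv hd' with hne | ⟨x, hx, hxle⟩
        · exact absurd hnew hne
        · have : u = wB := (Option.some_inj.mp hCu).symm
          subst this
          calc u + h C = q := hq.symm
            _ ≤ x.2.2 := hmin x hx
            _ ≤ w' + h C := hxle
      · replace hCu : Function.update S B (some wB) C = some u := hCu
        rw [Function.update_of_ne hCB] at hCu
        exact hinv.2.1 _ _ hCu w' hd'
    · rintro x (⟨hxQ, -⟩ | ⟨r, w', hw', hex, rfl⟩)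
      · exact hinv.2.2.1 x hxQ
      · exact ⟨Derives.step r w' (fun i => hN _ _ (hw' i)), rfl⟩
    · intro r u hu
      by_cases hcB : P.concl r = B
      · refine Or.inl ?_
        show Function.update S B (some wB) (P.concl r) ≠ none
        rw [hcB, Function.update_self]
        simp
      · by_cases hant : ∃ i, P.ant r i = B
        · exact Or.inr (Set.mem_union_right _ ⟨r, u, hu, hant, rfl⟩)
        · push_neg at hant
          have hu' : ∀ i, S (P.ant r i) = some (u i) := by
            intro i
            have h2 : Function.update S B (some wB) (P.ant r i) = some (u i) := hu i
            rwa [Function.update_of_ne (hant i)] at h2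
          rcases hinv.2.2.2 r u hu' with hne | hitem
          · refine Or.inl ?_
            show Function.update S B (some wB) (P.concl r) ≠ none
            rwa [Function.update_of_ne hcB]
          · exact Or.inr (Set.mem_union_left _
              ⟨hitem, fun hq' => hcB (congrArg Prod.fst hq')⟩)

lemma inv_reaches (hperf : ∀ B, h B = P.ellCtx goal B) {s : P.State}
    (hr : P.Reaches h s) : Inv P h s := by
  induction hr with
  | init => exact inv_init
  | step s s' hr hs IH => exact inv_step hperf IH hs

end ALDP

/-- If `h` is a perfect heuristic for an additive lightest
derivation problem, i.e. `h(B) = ℓ(context(B),R)` for all `B`, then every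
statement expanded by A*LD before `goal` is expanded appears in some lightest
derivation of `goal`: A*LD only expands statements `B` with
`ℓ(B,R) + ℓ(context(B),R) ≤ ℓ(goal,R)`. -/
theorem perfect_heuristic_expansions (P : ALDP) [Finite P.Rule]
    (goal : P.Stmt) (h : P.Stmt → ℝ≥0∞)
    (hperf : ∀ B, h B = P.ellCtx goal B) :
    ∀ s s' : P.State, P.Reaches h s → P.Step h s s' →
      s.1 goal = none →
      ∀ B : P.Stmt, s.1 B = none → s'.1 B ≠ none →
        P.ell B + P.ellCtx goal B ≤ P.ell goal := by
  intro s s' hre hs hgoal B hB hB'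
  have hinv := ALDP.inv_reaches hperf hre
  cases hs with
  | skip S Q B0 w q hmem hmin hold => exact absurd hB hB'
  | expand S Q B0 w q hmem hmin hnew =>
    by_cases hBB : B = B0
    · subst hBB
      have hq : q = w + h B := (hinv.2.2.1 _ hmem).2
      have hdB : P.Derives B w := (hinv.2.2.1 _ hmem).1
      have h1 : P.ell B ≤ w := sInf_le hdB
      have h2 : q ≤ P.ell goal := by
        refine le_sInf fun b hb => ?_
        rcases ALDP.frontier hperf hinv hb with hne | ⟨x, hx, hxle⟩
        · exact absurd hgoal hne
        · have hg0 : h goal = 0 := by rw [hperf]; exact ALDP.ellCtx_goal_self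
          calc q ≤ x.2.2 := hmin x hx
            _ ≤ b + h goal := hxle
            _ = b := by rw [hg0, add_zero]
      calc P.ell B + P.ellCtx goal B = P.ell B + h B := by rw [hperf]
        _ ≤ w + h B := add_le_add_left h1 _
        _ = q := hq.symm
        _ ≤ P.ell goal := h2
    · refine absurd ?_ hB'
      show Function.update S B0 (some w) B = none
      rw [Function.update_of_ne hBB]
      exact hB
end
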